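/- If M is a popular matching in G and ρ is an alternating path or cycle in the symmetric difference M ⊕ M' for some matching M', then the number of vertices on ρ that prefer M' to M is at most the number of vertices on ρ that prefer M to M' (otherwise M ⊕ ρ would be more popular than M). -/

import Mathlib

open Classical

/-- A bipartite graph `G = (A ∪ B, E)` with strict preference lists:
`adj` is the edge relation, and each vertex ranks its neighbors by a rank
function (lower rank = more preferred), injective on neighbors. -/
structure PrefSys (A B : Type) where
  adj : A → B → Prop
  rankA : A → B → ℕ
  rankB : B → A → ℕ
  rankA_inj : ∀ a b b', adj a b → adj a b' → rankA a b = rankA a b' → b = b'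
  rankB_inj : ∀ b a a', adj a b → adj a' b → rankB b a = rankB b a' → a = a'

namespace PrefSys

variable {A B : Type} (P : PrefSys A B)

/-- `M` is a matching of `G`: a set of edges, no two sharing a vertex. -/
def IsMatching (M : Finset (A × B)) : Prop :=
  (∀ p ∈ M, P.adj p.1 p.2) ∧
  (∀ p ∈ M, ∀ q ∈ M, p.1 = q.1 → p = q) ∧
  (∀ p ∈ M, ∀ q ∈ M, p.2 = q.2 → p = q)

/-- Vertex `a ∈ A` prefers matching `M` to matching `M'`:
`a` is matched in `M` and either unmatched in `M'` or matched to a strictly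
worse partner in `M'`. -/
def prefA (M M' : Finset (A × B)) (a : A) : Prop :=
  ∃ b, (a, b) ∈ M ∧ ∀ b', (a, b') ∈ M' → P.rankA a b < P.rankA a b'

/-- Vertex `b ∈ B` prefers matching `M` to matching `M'`. -/
def prefB (M M' : Finset (A × B)) (b : B) : Prop :=
  ∃ a, (a, b) ∈ M ∧ ∀ a', (a', b) ∈ M' → P.rankB b a < P.rankB b a'

/-- `φ(M, M')`: the number of vertices preferring `M` to `M'`. -/
noncomputable def phi (M M' : Finset (A × B)) : ℕ :=
  Nat.card {a : A // P.prefA M M' a} + Nat.card {b : B // P.prefB M M' b}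

/-- A matching is popular if it never loses a head-to-head election. -/
def Popular (M : Finset (A × B)) : Prop :=
  P.IsMatching M ∧ ∀ M', P.IsMatching M' → P.phi M' M ≤ P.phi M M'

/-- `a`'s vote on the edge `(a,b)` versus its `M`-partner is `+`. -/
def voteAplus (M : Finset (A × B)) (a : A) (b : B) : Prop :=
  ∀ b', (a, b') ∈ M → P.rankA a b < P.rankA a b'

/-- `b`'s vote on the edge `(a,b)` versus its `M`-partner is `+`. -/
def voteBplus (M : Finset (A × B)) (a : A) (b : B) : Prop :=
  ∀ a', (a', b) ∈ M → P.rankB b a < P.rankB b a'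

/-- `(a,b)` is a blocking edge (an edge outside `M` labeled `(+,+)`). -/
def Blocking (M : Finset (A × B)) (a : A) (b : B) : Prop :=
  P.adj a b ∧ (a, b) ∉ M ∧ P.voteAplus M a b ∧ P.voteBplus M a b

/-- A stable matching: a matching with no blocking edge. -/
def Stable (M : Finset (A × B)) : Prop :=
  P.IsMatching M ∧ ∀ a b, ¬ P.Blocking M a b

/-- A dominant matching: popular, and more popular than every larger matching. -/
def Dominant (M : Finset (A × B)) : Prop :=
  P.Popular M ∧ ∀ M', P.IsMatching M' → M.card < M'.card → P.phi M' M < P.phi M M'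

/-- The edge `(a,b)` survives in the subgraph `G_M` (i.e. it is an edge of `G`
that is in `M` or is not labeled `(-,-)`). -/
def inGM (M : Finset (A × B)) (a : A) (b : B) : Prop :=
  P.adj a b ∧ ((a, b) ∈ M ∨ P.voteAplus M a b ∨ P.voteBplus M a b)

end PrefSys

namespace PrefSys

variable {A B : Type} (P : PrefSys A B)

/-- Vertices of `G`, as a sum type. -/
abbrev V (A B : Type) := Sum A B

/-- Adjacency in the subgraph `G_M` (symmetrized). -/
def vAdjGM (M : Finset (A × B)) : V A B → V A B → Prop
  | .inl a, .inr b => P.inGM M a b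
  | .inr b, .inl a => P.inGM M a b
  | _, _ => False

/-- The (unordered) pair `{x,y}` is an edge of the matching `M`. -/
def vInM (M : Finset (A × B)) : V A B → V A B → Prop
  | .inl a, .inr b => (a, b) ∈ M
  | .inr b, .inl a => (a, b) ∈ M
  | _, _ => False

/-- The (unordered) pair `{x,y}` is an edge labeled `(+,+)` wrt `M`. -/
def vPlusPlus (M : Finset (A × B)) : V A B → V A B → Prop
  | .inl a, .inr b => P.Blocking M a b
  | .inr b, .inl a => P.Blocking M a b
  | _, _ => False

/-- The vertex `x` is matched in `M`. -/
def vMatched (M : Finset (A × B)) : V A B → Prop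
  | .inl a => ∃ b, (a, b) ∈ M
  | .inr b => ∃ a, (a, b) ∈ M

/-- The list of consecutive pairs of a vertex list. -/
def edgesOf (v : List (V A B)) : List (V A B × V A B) := v.zip v.tail

/-- An alternating path with respect to `M` in the subgraph `G_M`:
a list of distinct vertices, consecutive ones adjacent in `G_M`, whose edges
alternate between matching and non-matching edges. -/
def IsAltPath (M : Finset (A × B)) (v : List (V A B)) : Prop :=
  v.Nodup ∧ v.Chain' (P.vAdjGM M) ∧
  (edgesOf v).Chain' (fun e f => vInM M e.1 e.2 ↔ ¬ vInM M f.1 f.2)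

/-- An augmenting path with respect to `M` in `G_M`: an alternating path with
at least one edge, both of whose endpoints are unmatched in `M`. -/
def IsAugPath (M : Finset (A × B)) (v : List (V A B)) : Prop :=
  P.IsAltPath M v ∧ 2 ≤ v.length ∧
  (∀ x, v.head? = some x → ¬ vMatched M x) ∧
  (∀ x, v.getLast? = some x → ¬ vMatched M x)

/-- The edges of a cycle given by a vertex list (consecutive pairs plus the
closing edge from the last vertex to the first). -/
def cycEdgesOf (v : List (V A B)) : List (V A B × V A B) :=
  match v.head?, v.getLast? with
  | some x, some y => edgesOf v ++ [(y, x)]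
  | _, _ => []

/-- An alternating cycle with respect to `M` in the subgraph `G_M`. -/
def IsAltCycle (M : Finset (A × B)) (v : List (V A B)) : Prop :=
  v.Nodup ∧ 4 ≤ v.length ∧
  (∀ e ∈ cycEdgesOf v, P.vAdjGM M e.1 e.2) ∧
  (cycEdgesOf v).Chain' (fun e f => vInM M e.1 e.2 ↔ ¬ vInM M f.1 f.2)

/-- The set of `G`-edges (as pairs in `A × B`) used by a list of vertex pairs. -/
noncomputable def edgeFinset (l : List (V A B × V A B)) : Finset (A × B) :=
  (l.filterMap (fun e => match e with
    | (.inl a, .inr b) => some (a, b)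
    | (.inr b, .inl a) => some (a, b)
    | _ => none)).toFinset

/-- `M ⊕ ρ`: switch `M` along the path with vertex list `v`. -/
noncomputable def augment (M : Finset (A × B)) (v : List (V A B)) : Finset (A × B) :=
  symmDiff M (edgeFinset (edgesOf v))

end PrefSys

namespace PrefSys

variable {A B : Type} (P : PrefSys A B)

/-- The vertex `x` prefers matching `M` to matching `M'`. -/
def vPref (M M' : Finset (A × B)) : V A B → Prop
  | .inl a => P.prefA M M' a
  | .inr b => P.prefB M M' b

/-- `v` is (the vertex list of) an alternating path component of the edge set
`D` (say `D = M ⊕ M'`): consecutive vertices are joined by edges of `D`, and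
the two endpoints have no further `D`-edge. -/
def IsCompPath (D : Finset (A × B)) (v : List (V A B)) : Prop :=
  v.Nodup ∧ 2 ≤ v.length ∧ v.Chain' (vInM D) ∧
  (∀ x y, v.head? = some x → vInM D x y → v[1]? = some y) ∧
  (∀ x y, v.getLast? = some x → vInM D x y → v.reverse[1]? = some y)

/-- `v` is (the vertex list of) an alternating cycle of the edge set `D`. -/
def IsCompCycle (D : Finset (A × B)) (v : List (V A B)) : Prop :=
  v.Nodup ∧ 4 ≤ v.length ∧ v.Chain' (vInM D) ∧
  (∀ x y, v.getLast? = some x → v.head? = some y → vInM D x y)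

end PrefSys


section Aux
open PrefSys

variable {A B : Type} {P : PrefSys A B} {M M' : Finset (A × B)}

lemma vInM_symm {N : Finset (A × B)} {x y : V A B} (h : vInM N x y) : vInM N y x := by
  cases x <;> cases y <;> exact h

lemma uniqA {N : Finset (A × B)} (hN : P.IsMatching N) {a : A} {b b' : B}
    (h : (a, b) ∈ N) (h' : (a, b') ∈ N) : b = b' :=
  congrArg Prod.snd (hN.2.1 _ h _ h' rfl)

lemma uniqB {N : Finset (A × B)} (hN : P.IsMatching N) {a a' : A} {b : B}
    (h : (a, b) ∈ N) (h' : (a', b) ∈ N) : a = a' :=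
  congrArg Prod.fst (hN.2.2 _ h _ h' rfl)

lemma pairTwoA (hM : P.IsMatching M) (hM' : P.IsMatching M') {a : A} {b b₁ b₂ : B}
    (hne : b₁ ≠ b₂) (h1 : (a, b₁) ∈ symmDiff M M') (h2 : (a, b₂) ∈ symmDiff M M')
    (h : (a, b) ∈ symmDiff M M') : b = b₁ ∨ b = b₂ := by
  rw [Finset.mem_symmDiff] at h1 h2 h
  rcases h1 with ⟨p1, q1⟩ | ⟨p1, q1⟩ <;> rcases h2 with ⟨p2, q2⟩ | ⟨p2, q2⟩ <;>
    rcases h with ⟨p, q⟩ | ⟨p, q⟩ <;>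
    first
      | exact absurd (uniqA (P := P) hM p1 p2) hne
      | exact absurd (uniqA (P := P) hM' p1 p2) hne
      | exact Or.inl (uniqA (P := P) hM p p1)
      | exact Or.inl (uniqA (P := P) hM' p p1)
      | exact Or.inr (uniqA (P := P) hM p p2)
      | exact Or.inr (uniqA (P := P) hM' p p2)

lemma pairTwoB (hM : P.IsMatching M) (hM' : P.IsMatching M') {b : B} {a a₁ a₂ : A}
    (hne : a₁ ≠ a₂) (h1 : (a₁, b) ∈ symmDiff M M') (h2 : (a₂, b) ∈ symmDiff M M')
    (h : (a, b) ∈ symmDiff M M') : a = a₁ ∨ a = a₂ := by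
  rw [Finset.mem_symmDiff] at h1 h2 h
  rcases h1 with ⟨p1, q1⟩ | ⟨p1, q1⟩ <;> rcases h2 with ⟨p2, q2⟩ | ⟨p2, q2⟩ <;>
    rcases h with ⟨p, q⟩ | ⟨p, q⟩ <;>
    first
      | exact absurd (uniqB (P := P) hM p1 p2) hne
      | exact absurd (uniqB (P := P) hM' p1 p2) hne
      | exact Or.inl (uniqB (P := P) hM p p1)
      | exact Or.inl (uniqB (P := P) hM' p p1)
      | exact Or.inr (uniqB (P := P) hM p p2)
      | exact Or.inr (uniqB (P := P) hM' p p2)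

lemma vTwo (hM : P.IsMatching M) (hM' : P.IsMatching M') {x z₁ z₂ y : V A B}
    (hne : z₁ ≠ z₂) (h1 : vInM (symmDiff M M') x z₁) (h2 : vInM (symmDiff M M') x z₂)
    (h : vInM (symmDiff M M') x y) : y = z₁ ∨ y = z₂ := by
  rcases x with a | b
  · rcases z₁ with a₁ | b₁
    · exact h1.elim
    rcases z₂ with a₂ | b₂
    · exact h2.elim
    rcases y with ay | by'
    · exact h.elim
    have hbne : b₁ ≠ b₂ := fun e => hne (congrArg Sum.inr e)
    rcases pairTwoA (P := P) hM hM' hbne h1 h2 h with e | e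
    · exact Or.inl (congrArg Sum.inr e)
    · exact Or.inr (congrArg Sum.inr e)
  · rcases z₁ with a₁ | b₁
    swap
    · exact h1.elim
    rcases z₂ with a₂ | b₂
    swap
    · exact h2.elim
    rcases y with ay | by'
    swap
    · exact h.elim
    have hane : a₁ ≠ a₂ := fun e => hne (congrArg Sum.inl e)
    rcases pairTwoB (P := P) hM hM' hane h1 h2 h with e | e
    · exact Or.inl (congrArg Sum.inl e)
    · exact Or.inr (congrArg Sum.inl e)

lemma chain_neighbor {α : Type*} {R : α → α → Prop} (hs : ∀ p q, R p q → R q p)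
    {l : List α} (hc : l.Chain' R) (hlen : 2 ≤ l.length) {x : α} (hx : x ∈ l) :
    ∃ z ∈ l, R x z := by
  rw [List.Chain', List.isChain_iff_getElem] at hc
  obtain ⟨i, hi, rfl⟩ := List.getElem_of_mem hx
  by_cases h : i + 1 < l.length
  · refine ⟨l[i + 1], List.getElem_mem _, ?_⟩
    simpa using hc i (by omega)
  · refine ⟨l[i - 1]'(by omega), List.getElem_mem _, hs _ _ ?_⟩
    have := hc (i - 1) (by omega)
    simpa [List.get_eq_getElem, show i - 1 + 1 = i from by omega] using this

lemma comp_mem (hMm : P.IsMatching M) (hM'm : P.IsMatching M') {v : List (V A B)}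
    (hv : IsCompPath (symmDiff M M') v ∨ IsCompCycle (symmDiff M M') v)
    {x y : V A B} (hx : x ∈ v) (hxy : vInM (symmDiff M M') x y) : y ∈ v := by
  obtain ⟨i, hi, rfl⟩ := List.getElem_of_mem hx
  rcases hv with ⟨hnd, hlen, hch, hhead, hlast⟩ | ⟨hnd, hlen, hch, hcyc⟩
  · rw [List.Chain', List.isChain_iff_getElem] at hch
    by_cases h0 : i = 0
    · subst h0
      have hh : v.head? = some v[0] := by
        rw [List.head?_eq_getElem?]; exact List.getElem?_eq_getElem hi
      exact List.mem_of_getElem? (hhead _ _ hh hxy)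
    · by_cases hl : i = v.length - 1
      · subst hl
        have hg : v.getLast? = some (v[v.length - 1]'hi) := by
          rw [List.getLast?_eq_getElem?]; exact List.getElem?_eq_getElem hi
        exact List.mem_reverse.mp (List.mem_of_getElem? (hlast _ _ hg hxy))
      · have e1 := hch (i - 1) (by omega)
        have e2 := hch i (by omega)
        simp only [List.get_eq_getElem, show i - 1 + 1 = i from by omega] at e1 e2
        have hne : (v[i + 1]'(by omega) : V A B) ≠ v[i - 1]'(by omega) := by
          intro h
          have := (List.Nodup.getElem_inj_iff hnd).mp h
          omega
        rcases vTwo (P := P) hMm hM'm hne e2 (vInM_symm e1) hxy with h | h <;>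
          rw [h] <;> exact List.getElem_mem _
  · rw [List.Chain', List.isChain_iff_getElem] at hch
    have hn1 : v.length - 1 < v.length := by omega
    have hh : v.head? = some (v[0]'(by omega)) := by
      rw [List.head?_eq_getElem?]; exact List.getElem?_eq_getElem (by omega)
    have hg : v.getLast? = some (v[v.length - 1]'hn1) := by
      rw [List.getLast?_eq_getElem?]; exact List.getElem?_eq_getElem hn1
    have hclose : vInM (symmDiff M M') (v[v.length - 1]'hn1) (v[0]'(by omega)) :=
      hcyc _ _ hg hh
    by_cases hl : i = v.length - 1
    · subst hl
      have e1 := hch (v.length - 2) (by omega)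
      simp only [List.get_eq_getElem, show v.length - 2 + 1 = v.length - 1 from by omega] at e1
      have hne : (v[0]'(by omega) : V A B) ≠ v[v.length - 2]'(by omega) := by
        intro h
        have := (List.Nodup.getElem_inj_iff hnd).mp h
        omega
      rcases vTwo (P := P) hMm hM'm hne hclose (vInM_symm e1) hxy with h | h <;>
        rw [h] <;> exact List.getElem_mem _
    · by_cases h0 : i = 0
      · subst h0
        have e2 := hch 0 (by omega)
        have hne : (v[0 + 1]'(by omega) : V A B) ≠ v[v.length - 1]'hn1 := by
          intro h
          have := (List.Nodup.getElem_inj_iff hnd).mp h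
          omega
        rcases vTwo (P := P) hMm hM'm hne e2 (vInM_symm hclose) hxy with h | h <;>
          rw [h] <;> exact List.getElem_mem _
      · have e1 := hch (i - 1) (by omega)
        have e2 := hch i (by omega)
        simp only [List.get_eq_getElem, show i - 1 + 1 = i from by omega] at e1 e2
        have hne : (v[i + 1]'(by omega) : V A B) ≠ v[i - 1]'(by omega) := by
          intro h
          have := (List.Nodup.getElem_inj_iff hnd).mp h
          omega
        rcases vTwo (P := P) hMm hM'm hne e2 (vInM_symm e1) hxy with h | h <;>
          rw [h] <;> exact List.getElem_mem _

lemma comp_mem' (hMm : P.IsMatching M) (hM'm : P.IsMatching M') {v : List (V A B)}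
    (hv : IsCompPath (symmDiff M M') v ∨ IsCompCycle (symmDiff M M') v)
    {x y : V A B} (hx : x ∈ v) (hxy : vInM M x y ∨ vInM M' x y) : y ∈ v := by
  by_cases hD : vInM (symmDiff M M') x y
  · exact comp_mem (P := P) hMm hM'm hv hx hD
  · exfalso
    have hlen : 2 ≤ v.length := by
      rcases hv with h | h
      · exact h.2.1
      · have := h.2.1; omega
    have hch : v.Chain' (vInM (symmDiff M M')) := by
      rcases hv with h | h
      · exact h.2.2.1
      · exact h.2.2.1
    obtain ⟨z, hz, hRz⟩ := chain_neighbor (fun p q h => vInM_symm h) hch hlen hx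
    rcases x with a | b
    · rcases y with a' | b'
      · rcases hxy with h | h <;> exact h
      rcases z with az | bz
      · exact hRz.elim
      -- (a,b') ∈ M and M'
      rw [show (vInM (symmDiff M M') (Sum.inl a) (Sum.inr b') : Prop) =
        ((a, b') ∈ symmDiff M M') from rfl, Finset.mem_symmDiff] at hD
      push_neg at hD
      have hboth : (a, b') ∈ M ∧ (a, b') ∈ M' := by
        rcases hxy with h | h
        · exact ⟨h, hD.1 h⟩
        · exact ⟨hD.2 h, h⟩
      have hRz' : (a, bz) ∈ symmDiff M M' := hRz
      rw [Finset.mem_symmDiff] at hRz'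
      rcases hRz' with ⟨h1, h2⟩ | ⟨h1, h2⟩
      · exact h2 ((uniqA (P := P) hMm hboth.1 h1) ▸ hboth.2)
      · exact h2 ((uniqA (P := P) hM'm hboth.2 h1) ▸ hboth.1)
    · rcases y with a' | b'
      swap
      · rcases hxy with h | h <;> exact h
      rcases z with az | bz
      swap
      · exact hRz.elim
      rw [show (vInM (symmDiff M M') (Sum.inr b) (Sum.inl a') : Prop) =
        ((a', b) ∈ symmDiff M M') from rfl, Finset.mem_symmDiff] at hD
      push_neg at hD
      have hboth : (a', b) ∈ M ∧ (a', b) ∈ M' := by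
        rcases hxy with h | h
        · exact ⟨h, hD.1 h⟩
        · exact ⟨hD.2 h, h⟩
      have hRz' : (az, b) ∈ symmDiff M M' := hRz
      rw [Finset.mem_symmDiff] at hRz'
      rcases hRz' with ⟨h1, h2⟩ | ⟨h1, h2⟩
      · exact h2 ((uniqB (P := P) hMm hboth.1 h1) ▸ hboth.2)
      · exact h2 ((uniqB (P := P) hM'm hboth.2 h1) ▸ hboth.1)

end Aux

open PrefSys in
/-- if `M` is popular and `ρ` is an alternating path or cycle of
`M ⊕ M'` for some matching `M'`, then on the vertices of `ρ`, the number
preferring `M'` to `M` is at most the number preferring `M` to `M'`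
(otherwise `M ⊕ ρ` would be more popular than `M`). -/
theorem popular_path_cycle_votes {A B : Type} [Fintype A] [Fintype B]
    (P : PrefSys A B) (M M' : Finset (A × B)) (hM : P.Popular M)
    (hM' : P.IsMatching M') (v : List (V A B))
    (hv : IsCompPath (symmDiff M M') v ∨ IsCompCycle (symmDiff M M') v) :
    Nat.card {x : V A B // x ∈ v ∧ vPref P M' M x} ≤
      Nat.card {x : V A B // x ∈ v ∧ vPref P M M' x} := by
  classical
  obtain ⟨hMm, hpop⟩ := hM
  -- transfer lemma: edges of M or M' incident to v stay within v
  have memA : ∀ p : A × B, (p ∈ M ∨ p ∈ M') →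
      (((Sum.inl p.1 : V A B) ∈ v) ↔ ((Sum.inr p.2 : V A B) ∈ v)) := by
    intro p h
    constructor
    · intro ha
      exact comp_mem' (P := P) hMm hM' hv ha h
    · intro hb
      exact comp_mem' (P := P) hMm hM' hv hb h
  -- the switched matching
  haveI : DecidableEq (V A B) := Classical.decEq _
  set M'' : Finset (A × B) :=
    (@Finset.filter _ (fun p => (Sum.inl p.1 : V A B) ∉ v) (fun _ => Classical.propDecidable _) M) ∪
      (@Finset.filter _ (fun p => (Sum.inl p.1 : V A B) ∈ v) (fun _ => Classical.propDecidable _) M') with hM''def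
  have memIn : ∀ p : A × B, (Sum.inl p.1 : V A B) ∈ v → (p ∈ M'' ↔ p ∈ M') := by
    intro p ha
    simp only [hM''def, Finset.mem_union, Finset.mem_filter]
    constructor
    · rintro (⟨h, hn⟩ | ⟨h, _⟩)
      · exact absurd ha hn
      · exact h
    · intro h
      exact Or.inr ⟨h, ha⟩
  have memOut : ∀ p : A × B, (Sum.inl p.1 : V A B) ∉ v → (p ∈ M'' ↔ p ∈ M) := by
    intro p ha
    simp only [hM''def, Finset.mem_union, Finset.mem_filter]
    constructor
    · rintro (⟨h, _⟩ | ⟨_, hn⟩)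
      · exact h
      · exact absurd hn ha
    · intro h
      exact Or.inl ⟨h, ha⟩
  have memInB : ∀ p : A × B, (Sum.inr p.2 : V A B) ∈ v → (p ∈ M'' ↔ p ∈ M') := by
    intro p hb
    rcases Classical.em ((Sum.inl p.1 : V A B) ∈ v) with ha | ha
    · exact memIn p ha
    · constructor
      · intro h
        have hM0 := (memOut p ha).mp h
        exact absurd ((memA p (Or.inl hM0)).mpr hb) ha
      · intro h
        exact absurd ((memA p (Or.inr h)).mpr hb) ha
  have memOutB : ∀ p : A × B, (Sum.inr p.2 : V A B) ∉ v → (p ∈ M'' ↔ p ∈ M) := by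
    intro p hb
    rcases Classical.em ((Sum.inl p.1 : V A B) ∈ v) with ha | ha
    · constructor
      · intro h
        exact absurd ((memA p (Or.inr ((memIn p ha).mp h))).mp ha) hb
      · intro h
        exact absurd ((memA p (Or.inl h)).mp ha) hb
    · exact memOut p ha
  have hM''m : P.IsMatching M'' := by
    refine ⟨?_, ?_, ?_⟩
    · intro p hp
      simp only [hM''def, Finset.mem_union, Finset.mem_filter] at hp
      rcases hp with ⟨h, -⟩ | ⟨h, -⟩
      · exact hMm.1 _ h
      · exact hM'.1 _ h
    · intro p hp q hq h1
      rcases Classical.em ((Sum.inl p.1 : V A B) ∈ v) with ha | ha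
      · have ha' : (Sum.inl q.1 : V A B) ∈ v := by rwa [← h1]
        exact hM'.2.1 p ((memIn p ha).mp hp) q ((memIn q ha').mp hq) h1
      · have ha' : (Sum.inl q.1 : V A B) ∉ v := by rwa [← h1]
        exact hMm.2.1 p ((memOut p ha).mp hp) q ((memOut q ha').mp hq) h1
    · intro p hp q hq h2
      rcases Classical.em ((Sum.inr p.2 : V A B) ∈ v) with hb | hb
      · have hb' : (Sum.inr q.2 : V A B) ∈ v := by rwa [← h2]
        exact hM'.2.2 p ((memInB p hb).mp hp) q ((memInB q hb').mp hq) h2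
      · have hb' : (Sum.inr q.2 : V A B) ∉ v := by rwa [← h2]
        exact hMm.2.2 p ((memOutB p hb).mp hp) q ((memOutB q hb').mp hq) h2
  -- preference characterizations
  have prefA1 : ∀ a : A, P.prefA M'' M a ↔
      ((Sum.inl a : V A B) ∈ v ∧ P.prefA M' M a) := by
    intro a
    rcases Classical.em ((Sum.inl a : V A B) ∈ v) with ha | ha
    · simp only [ha, true_and, PrefSys.prefA]
      constructor
      · rintro ⟨b, hb, hr⟩
        exact ⟨b, (memIn (a, b) ha).mp hb, hr⟩
      · rintro ⟨b, hb, hr⟩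
        exact ⟨b, (memIn (a, b) ha).mpr hb, hr⟩
    · simp only [ha, false_and, iff_false]
      rintro ⟨b, hb, hr⟩
      exact lt_irrefl _ (hr b ((memOut (a, b) ha).mp hb))
  have prefA2 : ∀ a : A, P.prefA M M'' a ↔
      ((Sum.inl a : V A B) ∈ v ∧ P.prefA M M' a) := by
    intro a
    rcases Classical.em ((Sum.inl a : V A B) ∈ v) with ha | ha
    · simp only [ha, true_and, PrefSys.prefA]
      constructor
      · rintro ⟨b, hb, hr⟩
        exact ⟨b, hb, fun b' h' => hr b' ((memIn (a, b') ha).mpr h')⟩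
      · rintro ⟨b, hb, hr⟩
        exact ⟨b, hb, fun b' h' => hr b' ((memIn (a, b') ha).mp h')⟩
    · simp only [ha, false_and, iff_false]
      rintro ⟨b, hb, hr⟩
      exact lt_irrefl _ (hr b ((memOut (a, b) ha).mpr hb))
  have prefB1 : ∀ b : B, P.prefB M'' M b ↔
      ((Sum.inr b : V A B) ∈ v ∧ P.prefB M' M b) := by
    intro b
    rcases Classical.em ((Sum.inr b : V A B) ∈ v) with hb | hb
    · simp only [hb, true_and, PrefSys.prefB]
      constructor
      · rintro ⟨a, ha, hr⟩
        exact ⟨a, (memInB (a, b) hb).mp ha, hr⟩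
      · rintro ⟨a, ha, hr⟩
        exact ⟨a, (memInB (a, b) hb).mpr ha, hr⟩
    · simp only [hb, false_and, iff_false]
      rintro ⟨a, ha, hr⟩
      exact lt_irrefl _ (hr a ((memOutB (a, b) hb).mp ha))
  have prefB2 : ∀ b : B, P.prefB M M'' b ↔
      ((Sum.inr b : V A B) ∈ v ∧ P.prefB M M' b) := by
    intro b
    rcases Classical.em ((Sum.inr b : V A B) ∈ v) with hb | hb
    · simp only [hb, true_and, PrefSys.prefB]
      constructor
      · rintro ⟨a, ha, hr⟩
        exact ⟨a, ha, fun a' h' => hr a' ((memInB (a', b) hb).mpr h')⟩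
      · rintro ⟨a, ha, hr⟩
        exact ⟨a, ha, fun a' h' => hr a' ((memInB (a', b) hb).mp h')⟩
    · simp only [hb, false_and, iff_false]
      rintro ⟨a, ha, hr⟩
      exact lt_irrefl _ (hr a ((memOutB (a, b) hb).mpr ha))
  -- counting
  have split : ∀ p : V A B → Prop,
      Nat.card {x : V A B // p x} =
        Nat.card {a : A // p (Sum.inl a)} + Nat.card {b : B // p (Sum.inr b)} := by
    intro p
    rw [Nat.card_congr (Equiv.subtypeSum (p := p)), Nat.card_sum]
  have e1 : Nat.card {x : V A B // x ∈ v ∧ vPref P M' M x} = P.phi M'' M := by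
    show _ = Nat.card {a : A // P.prefA M'' M a} + Nat.card {b : B // P.prefB M'' M b}
    rw [split]
    congr 1
    · exact Nat.card_congr (Equiv.subtypeEquivRight fun a => (prefA1 a).symm)
    · exact Nat.card_congr (Equiv.subtypeEquivRight fun b => (prefB1 b).symm)
  have e2 : Nat.card {x : V A B // x ∈ v ∧ vPref P M M' x} = P.phi M M'' := by
    show _ = Nat.card {a : A // P.prefA M M'' a} + Nat.card {b : B // P.prefB M M'' b}
    rw [split]
    congr 1
    · exact Nat.card_congr (Equiv.subtypeEquivRight fun a => Iff.trans (Iff.rfl) (prefA2 a).symm)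
    · exact Nat.card_congr (Equiv.subtypeEquivRight fun b => Iff.trans (Iff.rfl) (prefB2 b).symm)
  rw [e1, e2]
  exact hpop M'' hM''m
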